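/- arXiv:2208.14960 — 5 statements merged into one kernel-verified Lean document; each statement's English description precedes it below -/
import Mathlib

section
/- Let G be a group, let Λ be a countable index set, and for each λ ∈ Λ let π_λ be a unitary representation of G on a finite-dimensional complex inner product space V_λ of dimension d_λ, and let a_λ ≥ 0 be real numbers with ∑_{λ∈Λ} d_λ · a_λ < ∞. Then for all g₁, g₂ ∈ G the series k(g₁, g₂) := ∑_{λ∈Λ} a_λ · Re(tr(π_λ(g₂⁻¹ · g₁))) converges absolutely; the resulting kernel k is bi-invariant, i.e. k(h₁ · g₁ · h₂⁻¹, h₁ · g₂ · h₂⁻¹) = k(g₁, g₂) for all h₁, h₂, g₁, g₂ ∈ G; and k is a positive semidefinite kernel on G. (This is the sufficiency direction of the paper's Theorem 1 on stationary kernels on compact Lie groups.) -/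
set_option linter.unusedSectionVars false

open scoped InnerProductSpace

lemma trace_inner {E : Type*} [NormedAddCommGroup E] [InnerProductSpace ℂ E]
    [FiniteDimensional ℂ E] (f : E →ₗ[ℂ] E) :
    LinearMap.trace ℂ E f =
      ∑ i, ⟪(stdOrthonormalBasis ℂ E) i, f ((stdOrthonormalBasis ℂ E) i)⟫_ℂ := by
  set b := stdOrthonormalBasis ℂ E
  rw [LinearMap.trace_eq_matrix_trace ℂ b.toBasis f, Matrix.trace]
  simp [Matrix.diag, LinearMap.toMatrix_apply, OrthonormalBasis.coe_toBasis_repr_apply,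
    OrthonormalBasis.repr_apply_apply, b.coe_toBasis]

section Test
variable {G : Type*} [Group G] {E : Type*} [NormedAddCommGroup E] [InnerProductSpace ℂ E]
    [FiniteDimensional ℂ E] (π : G →* (E →ₗ[ℂ] E))
    (hunit : ∀ (g : G) (u v : E), ⟪π g u, π g v⟫_ℂ = ⟪u, v⟫_ℂ)

include hunit

lemma pi_inv_cancel (g : G) (v : E) : π g (π g⁻¹ v) = v := by
  have h : π g * π g⁻¹ = 1 := by rw [← map_mul, mul_inv_cancel, map_one]
  calc π g (π g⁻¹ v) = (π g * π g⁻¹) v := rfl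
    _ = v := by rw [h]; rfl

lemma norm_pi (g : G) (v : E) : ‖π g v‖ = ‖v‖ := by
  rw [norm_eq_sqrt_re_inner (𝕜 := ℂ), norm_eq_sqrt_re_inner (𝕜 := ℂ) v, hunit]

lemma abs_re_trace_le (g : G) :
    |(LinearMap.trace ℂ E (π g)).re| ≤ (Module.finrank ℂ E : ℝ) := by
  rw [trace_inner, Complex.re_sum]
  calc |∑ i, (⟪(stdOrthonormalBasis ℂ E) i, π g ((stdOrthonormalBasis ℂ E) i)⟫_ℂ).re|
      ≤ ∑ i, |(⟪(stdOrthonormalBasis ℂ E) i, π g ((stdOrthonormalBasis ℂ E) i)⟫_ℂ).re| :=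
        Finset.abs_sum_le_sum_abs _ _
    _ ≤ ∑ _i : Fin (Module.finrank ℂ E), (1 : ℝ) := by
        refine Finset.sum_le_sum fun i _ => ?_
        have h1 := norm_inner_le_norm (𝕜 := ℂ)
          ((stdOrthonormalBasis ℂ E) i) (π g ((stdOrthonormalBasis ℂ E) i))
        have h2 : |(⟪(stdOrthonormalBasis ℂ E) i, π g ((stdOrthonormalBasis ℂ E) i)⟫_ℂ).re|
            ≤ ‖⟪(stdOrthonormalBasis ℂ E) i, π g ((stdOrthonormalBasis ℂ E) i)⟫_ℂ‖ :=
          Complex.abs_re_le_norm _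
        refine h2.trans (h1.trans ?_)
        rw [norm_pi π hunit, (stdOrthonormalBasis ℂ E).orthonormal.1 i]
        norm_num
    _ = (Module.finrank ℂ E : ℝ) := by simp

lemma trace_conj_inv (h g : G) :
    LinearMap.trace ℂ E (π (h * g * h⁻¹)) = LinearMap.trace ℂ E (π g) := by
  have h1 : π (h * g * h⁻¹) = π h * π g * π h⁻¹ := by rw [map_mul, map_mul]
  rw [h1, LinearMap.trace_mul_comm, ← mul_assoc, ← map_mul, inv_mul_cancel, map_one, one_mul]

lemma trace_eq_inner_sum (g₁ g₂ : G) :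
    LinearMap.trace ℂ E (π (g₂⁻¹ * g₁)) =
      ∑ e, ⟪π g₂ ((stdOrthonormalBasis ℂ E) e), π g₁ ((stdOrthonormalBasis ℂ E) e)⟫_ℂ := by
  have h1 : π (g₂⁻¹ * g₁) = π g₂⁻¹ * π g₁ := map_mul π _ _
  rw [h1, trace_inner]
  refine Finset.sum_congr rfl fun e _ => ?_
  rw [← hunit g₂]
  congr 1
  exact (pi_inv_cancel π hunit g₂ _)
end Test

section Test2
variable {G : Type*} [Group G] {E : Type*} [NormedAddCommGroup E] [InnerProductSpace ℂ E]
    [FiniteDimensional ℂ E] (π : G →* (E →ₗ[ℂ] E))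
    (hunit : ∀ (g : G) (u v : E), ⟪π g u, π g v⟫_ℂ = ⟪u, v⟫_ℂ)
include hunit

lemma psd_term (n : ℕ) (x : Fin n → G) (c : Fin n → ℝ) :
    0 ≤ ∑ i : Fin n, ∑ j : Fin n,
      c i * c j * (LinearMap.trace ℂ E (π ((x j)⁻¹ * x i))).re := by
  set b := stdOrthonormalBasis ℂ E with hb
  set w : Fin (Module.finrank ℂ E) → E := fun e => ∑ i, (c i : ℂ) • π (x i) (b e) with hw
  have key : ∑ i : Fin n, ∑ j : Fin n,
      ((c i : ℂ) * (c j : ℂ)) * LinearMap.trace ℂ E (π ((x j)⁻¹ * x i))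
      = ∑ e, ⟪w e, w e⟫_ℂ := by
    have hterm : ∀ i j : Fin n, ((c i : ℂ) * (c j : ℂ)) * LinearMap.trace ℂ E (π ((x j)⁻¹ * x i))
        = ∑ e, ⟪(c j : ℂ) • π (x j) (b e), (c i : ℂ) • π (x i) (b e)⟫_ℂ := by
      intro i j
      rw [trace_eq_inner_sum π hunit, Finset.mul_sum]
      refine Finset.sum_congr rfl fun e _ => ?_
      rw [inner_smul_left, inner_smul_right, Complex.conj_ofReal]
      ring
    simp only [hterm]
    simp only [hw, sum_inner, inner_sum]
    calc ∑ i : Fin n, ∑ j : Fin n, ∑ e, ⟪(c j : ℂ) • π (x j) (b e), (c i : ℂ) • π (x i) (b e)⟫_ℂ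
        = ∑ j : Fin n, ∑ i : Fin n, ∑ e,
            ⟪(c j : ℂ) • π (x j) (b e), (c i : ℂ) • π (x i) (b e)⟫_ℂ := Finset.sum_comm
      _ = ∑ j : Fin n, ∑ e, ∑ i : Fin n,
            ⟪(c j : ℂ) • π (x j) (b e), (c i : ℂ) • π (x i) (b e)⟫_ℂ :=
          Finset.sum_congr rfl fun j _ => Finset.sum_comm
      _ = ∑ e, ∑ j : Fin n, ∑ i : Fin n,
            ⟪(c j : ℂ) • π (x j) (b e), (c i : ℂ) • π (x i) (b e)⟫_ℂ := Finset.sum_comm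
      _ = ∑ e, ∑ i : Fin n, ∑ j : Fin n,
            ⟪(c j : ℂ) • π (x j) (b e), (c i : ℂ) • π (x i) (b e)⟫_ℂ :=
          Finset.sum_congr rfl fun e _ => Finset.sum_comm
  have hre : ∑ i : Fin n, ∑ j : Fin n,
      c i * c j * (LinearMap.trace ℂ E (π ((x j)⁻¹ * x i))).re
      = (∑ e, ⟪w e, w e⟫_ℂ).re := by
    rw [← key, Complex.re_sum]
    refine Finset.sum_congr rfl fun i _ => ?_
    rw [Complex.re_sum]
    refine Finset.sum_congr rfl fun j _ => ?_
    rw [show ((c i : ℂ) * (c j : ℂ)) = ((c i * c j : ℝ) : ℂ) by push_cast; ring,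
      Complex.re_ofReal_mul]
  rw [hre, Complex.re_sum]
  refine Finset.sum_nonneg fun e _ => ?_
  simpa using inner_self_nonneg (𝕜 := ℂ) (x := w e)
end Test2


/-- A kernel `k : X × X → ℝ` is positive semidefinite if for every `n`, all
`x₁, …, xₙ ∈ X` and all real `c₁, …, cₙ`, `∑ᵢⱼ cᵢ cⱼ k(xᵢ, xⱼ) ≥ 0`. -/
def IsPSDKernel {X : Type*} (k : X → X → ℝ) : Prop :=
  ∀ (n : ℕ) (x : Fin n → X) (c : Fin n → ℝ),
    0 ≤ ∑ i : Fin n, ∑ j : Fin n, c i * c j * k (x i) (x j)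


/-- Sufficiency direction of Theorem 1: given a countable family of finite-dimensional unitary
representations `π λ` of a group `G`, with characters `χ λ = tr ∘ π λ`, and nonnegative
coefficients `a λ` with `∑ d_λ a_λ < ∞`, the series
`k(g₁, g₂) = ∑_λ a_λ Re χ_λ(g₂⁻¹ g₁)` converges absolutely, defines a bi-invariant kernel,
and this kernel is positive semidefinite. -/
theorem stationary_kernel_on_group {G : Type*} [Group G]
    {Λ : Type*} [Countable Λ]
    (V : Λ → Type*) [∀ l, NormedAddCommGroup (V l)] [∀ l, InnerProductSpace ℂ (V l)]
    [∀ l, FiniteDimensional ℂ (V l)]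
    (π : ∀ l, G →* (V l →ₗ[ℂ] V l))
    (hunit : ∀ (l : Λ) (g : G) (u v : V l),
      (@inner ℂ (V l) _ (π l g u) (π l g v)) = @inner ℂ (V l) _ u v)
    (a : Λ → ℝ) (ha : ∀ l, 0 ≤ a l)
    (hsum : Summable fun l => (Module.finrank ℂ (V l) : ℝ) * a l) :
    (∀ g₁ g₂ : G,
      Summable fun l => |a l * (LinearMap.trace ℂ (V l) (π l (g₂⁻¹ * g₁))).re|) ∧
    (∀ h₁ h₂ g₁ g₂ : G,
      (∑' l, a l * (LinearMap.trace ℂ (V l)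
          (π l ((h₁ * g₂ * h₂⁻¹)⁻¹ * (h₁ * g₁ * h₂⁻¹)))).re) =
        ∑' l, a l * (LinearMap.trace ℂ (V l) (π l (g₂⁻¹ * g₁))).re) ∧
    IsPSDKernel (fun g₁ g₂ : G =>
      ∑' l, a l * (LinearMap.trace ℂ (V l) (π l (g₂⁻¹ * g₁))).re) := by
  have hsummable : ∀ g : G,
      Summable fun l => |a l * (LinearMap.trace ℂ (V l) (π l g)).re| := by
    intro g
    refine Summable.of_nonneg_of_le (fun l => abs_nonneg _) (fun l => ?_) hsum
    rw [abs_mul, abs_of_nonneg (ha l)]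
    calc a l * |(LinearMap.trace ℂ (V l) (π l g)).re|
        ≤ a l * (Module.finrank ℂ (V l) : ℝ) :=
          mul_le_mul_of_nonneg_left (abs_re_trace_le (π l) (hunit l) g) (ha l)
      _ = (Module.finrank ℂ (V l) : ℝ) * a l := mul_comm _ _
  refine ⟨fun g₁ g₂ => hsummable _, ?_, ?_⟩
  · intro h₁ h₂ g₁ g₂
    refine tsum_congr fun l => ?_
    have hg : (h₁ * g₂ * h₂⁻¹)⁻¹ * (h₁ * g₁ * h₂⁻¹) = h₂ * (g₂⁻¹ * g₁) * h₂⁻¹ := by group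
    rw [hg, trace_conj_inv (π l) (hunit l)]
  · intro n x c
    simp only []
    have hS : ∀ i j : Fin n, Summable fun l =>
        c i * c j * (a l * (LinearMap.trace ℂ (V l) (π l ((x j)⁻¹ * x i))).re) :=
      fun i j => ((hsummable _).of_abs).mul_left _
    have h1 : ∑' l, ∑ i : Fin n, ∑ j : Fin n,
        c i * c j * (a l * (LinearMap.trace ℂ (V l) (π l ((x j)⁻¹ * x i))).re)
        = ∑ i : Fin n, ∑ j : Fin n,
            c i * c j * ∑' l, a l * (LinearMap.trace ℂ (V l) (π l ((x j)⁻¹ * x i))).re := by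
      rw [Summable.tsum_finsetSum (fun i _ => summable_sum (fun j _ => hS i j))]
      refine Finset.sum_congr rfl fun i _ => ?_
      rw [Summable.tsum_finsetSum (fun j _ => hS i j)]
      exact Finset.sum_congr rfl fun j _ => tsum_mul_left
    rw [← h1]
    refine tsum_nonneg fun l => ?_
    have h2 : ∑ i : Fin n, ∑ j : Fin n,
        c i * c j * (a l * (LinearMap.trace ℂ (V l) (π l ((x j)⁻¹ * x i))).re)
        = a l * ∑ i : Fin n, ∑ j : Fin n,
            c i * c j * (LinearMap.trace ℂ (V l) (π l ((x j)⁻¹ * x i))).re := by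
      rw [Finset.mul_sum]
      refine Finset.sum_congr rfl fun i _ => ?_
      rw [Finset.mul_sum]
      exact Finset.sum_congr rfl fun j _ => by ring
    rw [h2]
    exact mul_nonneg (ha l) (psd_term (π l) (hunit l) n x c)
end

section
/- Let π be a unitary representation of a group G on a finite-dimensional complex inner product space V, let H be a subgroup of G, let e₁, …, e_r ∈ V satisfy π(h) e_j = e_j for all h ∈ H and 1 ≤ j ≤ r, and let A be an r × r real symmetric positive semidefinite matrix. Then there is a well-defined function k on (G/H) × (G/H) (where G/H is the set of left cosets of H) with k(g₁H, g₂H) = ∑_{j,k=1}^r A_{jk} · Re(⟨e_k, π(g₂⁻¹ · g₁) e_j⟩) for all g₁, g₂ ∈ G; this k is invariant under the natural left action of G on G/H, i.e. k(g • x, g • y) = k(x, y) for all g ∈ G and x, y ∈ G/H, and k is a positive semidefinite kernel on G/H. (This is the sufficiency direction of the paper's Theorem 2 on stationary kernels on homogeneous spaces.) -/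
/-- Sufficiency direction of Theorem 2: for a unitary representation `π` of `G` on a
finite-dimensional complex inner product space `V`, a subgroup `H ≤ G`, vectors
`e₁, …, e_r` fixed by `π(h)` for all `h ∈ H`, and a real symmetric positive semidefinite
matrix `A`, there is a well-defined kernel `k` on `G/H` with
`k(g₁H, g₂H) = ∑_{j,k} A_{jk} Re⟨e_k, π(g₂⁻¹ g₁) e_j⟩`, and this kernel is `G`-invariant
and positive semidefinite. -/
theorem stationary_kernel_on_homogeneous_space {G : Type*} [Group G]
    {V : Type*} [NormedAddCommGroup V] [InnerProductSpace ℂ V] [FiniteDimensional ℂ V]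
    (π : G →* (V →ₗ[ℂ] V))
    (hunit : ∀ (g : G) (u v : V), (@inner ℂ V _ (π g u) (π g v)) = @inner ℂ V _ u v)
    (H : Subgroup G) {r : ℕ} (e : Fin r → V)
    (hinv : ∀ h ∈ H, ∀ j : Fin r, π h (e j) = e j)
    (A : Matrix (Fin r) (Fin r) ℝ) (hA : A.PosSemidef) :
    ∃ k : G ⧸ H → G ⧸ H → ℝ,
      (∀ g₁ g₂ : G, k (g₁ : G ⧸ H) (g₂ : G ⧸ H) =
        ∑ j : Fin r, ∑ l : Fin r,
          A j l * (@inner ℂ V _ (e l) (π (g₂⁻¹ * g₁) (e j))).re) ∧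
      (∀ (g : G) (x y : G ⧸ H), k (g • x) (g • y) = k x y) ∧
      IsPSDKernel k := by
  classical
  set B := (open scoped MatrixOrder in CFC.sqrt A :) with hBdef
  have hBB : B * B = A := by
    open scoped MatrixOrder in exact CFC.sqrt_mul_sqrt_self A hA.nonneg
  have hBsym : ∀ i j, B i j = B j i := by
    intro i j
    have h := (open scoped MatrixOrder in (Matrix.LE.le.posSemidef (CFC.sqrt_nonneg A)).1 :)
    have h2 := congrFun (congrFun h i) j
    simpa [Matrix.conjTranspose_apply] using h2.symm
  -- the lift
  set φ : G → Fin r → V := fun g m => ∑ j, (B m j : ℂ) • π g (e j) with hφdef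
  have hwd : ∀ a b : G, a⁻¹ * b ∈ H → φ a = φ b := by
    intro a b hab
    funext m
    simp only [hφdef]
    congr 1
    funext j
    have : π b (e j) = π a (e j) := by
      have hb : b = a * (a⁻¹ * b) := by group
      rw [hb, map_mul, Module.End.mul_apply, hinv _ hab]
    rw [this]
  set Φ : G ⧸ H → Fin r → V := fun x => Quotient.liftOn' x φ (fun a b hab => hwd a b (QuotientGroup.leftRel_apply.mp hab)) with hΦdef
  have hΦmk : ∀ g : G, Φ (g : G ⧸ H) = φ g := fun g => rfl
  refine ⟨fun x y => ∑ m, (@inner ℂ V _ (Φ y m) (Φ x m)).re, ?_, ?_, ?_⟩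
  · intro g₁ g₂
    have key : ∀ j l : Fin r,
        (@inner ℂ V _ (π g₂ (e l)) (π g₁ (e j))).re
          = (@inner ℂ V _ (e l) (π (g₂⁻¹ * g₁) (e j))).re := by
      intro j l
      have h1 : π g₂ (π (g₂⁻¹ * g₁) (e j)) = π g₁ (e j) := by
        rw [← Module.End.mul_apply, ← map_mul]
        congr 1
        group
      rw [← h1, hunit]
    simp only [hΦmk, hφdef]
    simp only [sum_inner, inner_sum, inner_smul_left, inner_smul_right, Complex.re_sum,
      Complex.conj_ofReal]
    simp only [Finset.mul_sum, ← mul_assoc, ← Complex.ofReal_mul, Complex.re_sum,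
      Complex.re_ofReal_mul, key]
    have hAjl : ∀ j l : Fin r, A j l = ∑ m, B m j * B m l := by
      intro j l
      rw [← hBB]
      simp [Matrix.mul_apply]
      exact Finset.sum_congr rfl fun m _ => by rw [hBsym j m]
    simp only [hAjl, Finset.sum_mul]
    have step : ∀ (f : Fin r → Fin r → Fin r → ℝ),
        ∑ m, ∑ l, ∑ j, f m l j = ∑ l, ∑ j, ∑ m, f m l j := by
      intro f
      rw [Finset.sum_comm]
      exact Finset.sum_congr rfl fun l _ => Finset.sum_comm
    exact (step _).trans (Finset.sum_congr rfl fun j _ => Finset.sum_congr rfl fun l _ =>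
      Finset.sum_congr rfl fun m _ => by ring)
  · intro g x y
    induction x using Quotient.inductionOn' with
    | h a =>
      induction y using Quotient.inductionOn' with
      | h b =>
        have ha : g • (QuotientGroup.mk a : G ⧸ H) = QuotientGroup.mk (g * a) := rfl
        have hb : g • (QuotientGroup.mk b : G ⧸ H) = QuotientGroup.mk (g * b) := rfl
        show ∑ m, (@inner ℂ V _ (Φ (g • (QuotientGroup.mk b)) m)
            (Φ (g • (QuotientGroup.mk a)) m)).re = _
        rw [ha, hb]
        simp only [hΦmk, hφdef]
        congr 1
        funext m
        have h1 : ∀ g' : G, ∑ j, (B m j : ℂ) • π (g * g') (e j)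
            = π g (∑ j, (B m j : ℂ) • π g' (e j)) := by
          intro g'
          simp [map_mul, Module.End.mul_apply, map_sum, map_smul]
        rw [h1 a, h1 b, hunit]
  · intro n x c
    have : ∀ i j : Fin n, c i * c j * (∑ m, (@inner ℂ V _ (Φ (x j) m) (Φ (x i) m)).re)
        = ∑ m, (@inner ℂ V _ ((c j : ℂ) • Φ (x j) m) ((c i : ℂ) • Φ (x i) m)).re := by
      intro i j
      rw [Finset.mul_sum]
      congr 1
      funext m
      rw [inner_smul_left, inner_smul_right]
      simp [Complex.mul_re]
      ring
    simp only [this]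
    have step : ∀ (f : Fin n → Fin n → Fin r → ℝ),
        ∑ i, ∑ j, ∑ m, f i j m = ∑ m, ∑ i, ∑ j, f i j m := by
      intro f
      exact (Finset.sum_congr rfl fun i _ => Finset.sum_comm).trans Finset.sum_comm
    rw [step]
    refine Finset.sum_nonneg fun m _ => ?_
    have hsum : ∑ i, ∑ j, (@inner ℂ V _ ((c j : ℂ) • Φ (x j) m) ((c i : ℂ) • Φ (x i) m)).re
        = (@inner ℂ V _ (∑ j, (c j : ℂ) • Φ (x j) m) (∑ i, (c i : ℂ) • Φ (x i) m)).re := by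
      rw [sum_inner, Complex.re_sum]
      exact Finset.sum_comm.trans (Finset.sum_congr rfl fun j _ => by
        rw [inner_sum, Complex.re_sum])
    rw [hsum]
    exact inner_self_nonneg (𝕜 := ℂ) (x := ∑ i, (c i : ℂ) • Φ (x i) m)
end

section
/- Let (S, μ) be a measure space with μ a probability measure, let d, r be positive integers, and let ψ_{jk} : S → ℂ (1 ≤ j ≤ d, 1 ≤ k ≤ r) be measurable functions satisfying the orthogonality relations ∫_S ψ_{j₁k₁}(u) · conj(ψ_{j₂k₂}(u)) dμ(u) = 1/d if (j₁, k₁) = (j₂, k₂) and 0 otherwise. Let a be an r × r real symmetric matrix and define K(x, y) := ∑_{k₁,k₂=1}^r a_{k₁k₂} · ∑_{j=1}^d ψ_{jk₁}(x) · conj(ψ_{jk₂}(y)). Then K(x, y) = ∫_S K(x, u) · conj(K(y, u)) dμ(u) holds for all x, y ∈ S if and only if the matrix A := (1/d) · a is idempotent, i.e. A · A = A. (This is the paper's Proposition 5 characterizing valid phase functions on homogeneous spaces, stated via the orthogonality relations satisfied by matrix coefficients.) -/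
open MeasureTheory

section Aux

variable {S : Type*} [MeasurableSpace S] {μ : Measure S}

private lemma memLp_conj' {f : S → ℂ} (hf : MemLp f 2 μ) :
    MemLp (fun x => (starRingEnd ℂ) (f x)) 2 μ := by
  simpa [RCLike.inner_apply, mul_one] using hf.inner_const (𝕜 := ℂ) 1

private lemma integrable_mul_L2' {f g : S → ℂ} (hf : MemLp f 2 μ) (hg : MemLp g 2 μ) :
    Integrable (fun x => f x * g x) μ := by
  rw [← memLp_one_iff_integrable]
  have := hg.smul (φ := f) hf (r := (1:ENNReal)) (hpqr := ⟨by simp [ENNReal.inv_two_add_inv_two, one_div]⟩)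
  exact this

private lemma integral_csum {ι : Type*} [Fintype ι] (e : ι → ℂ) (F : ι → S → ℂ)
    (hF : ∀ i, Integrable (F i) μ) :
    ∫ u, ∑ i, e i * F i u ∂μ = ∑ i, e i * ∫ u, F i u ∂μ := by
  rw [integral_finset_sum]
  · exact Finset.sum_congr rfl fun i _ => integral_const_mul _ _
  · exact fun i _ => (hF i).const_mul (e i)

private lemma integral_csum_mul {ι : Type*} [Fintype ι] (e : ι → ℂ) (f : ι → S → ℂ) (g : S → ℂ)
    (hf : ∀ i, MemLp (f i) 2 μ) (hg : MemLp g 2 μ) :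
    ∫ u, (∑ i, e i * f i u) * g u ∂μ = ∑ i, e i * ∫ u, f i u * g u ∂μ := by
  have h1 : ∀ u, (∑ i, e i * f i u) * g u = ∑ i, e i * (f i u * g u) := by
    intro u; rw [Finset.sum_mul]; exact Finset.sum_congr rfl fun i _ => mul_assoc _ _ _
  simp_rw [h1]
  exact integral_csum _ _ fun i => integrable_mul_L2' (hf i) hg

private lemma integral_csum_mul_csum {ι κ : Type*} [Fintype ι] [Fintype κ]
    (e : ι → ℂ) (f : ι → S → ℂ) (e' : κ → ℂ) (g : κ → S → ℂ)
    (hf : ∀ i, MemLp (f i) 2 μ) (hg : ∀ j, MemLp (g j) 2 μ) :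
    ∫ u, (∑ i, e i * f i u) * (∑ j, e' j * g j u) ∂μ =
      ∑ i, ∑ j, e i * e' j * ∫ u, f i u * g j u ∂μ := by
  rw [integral_csum_mul e f _ hf (memLp_finset_sum _ fun j _ => ((hg j).const_mul (e' j)))]
  refine Finset.sum_congr rfl fun i _ => ?_
  have h2 : ∀ u, f i u * (∑ j, e' j * g j u) = (∑ j, e' j * g j u) * f i u := fun u => mul_comm _ _
  simp_rw [h2]
  rw [integral_csum_mul e' g (f i) hg (hf i)]
  have h3 : ∀ j, (∫ u, g j u * f i u ∂μ) = ∫ u, f i u * g j u ∂μ := fun j => by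
    congr 1; funext u; ring
  simp_rw [h3, Finset.mul_sum]
  exact Finset.sum_congr rfl fun j _ => (mul_assoc _ _ _).symm

private lemma sum3_comm {α β γ M : Type*} [AddCommMonoid M] [Fintype α] [Fintype β] [Fintype γ]
    (f : α → β → γ → M) :
    ∑ a, ∑ b, ∑ c, f a b c = ∑ c, ∑ a, ∑ b, f a b c :=
  (Finset.sum_congr rfl fun _ _ => Finset.sum_comm).trans Finset.sum_comm

private lemma key_integral {d r : ℕ}
    (ψ : Fin d → Fin r → S → ℂ)
    (hL2 : ∀ j k, MemLp (ψ j k) 2 μ)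
    (horth : ∀ (j₁ j₂ : Fin d) (k₁ k₂ : Fin r),
      ∫ u, ψ j₁ k₁ u * (starRingEnd ℂ) (ψ j₂ k₂ u) ∂μ =
        if j₁ = j₂ ∧ k₁ = k₂ then (1 : ℂ) / d else 0)
    (b : Fin r → Fin r → ℂ) (x y : S) :
    (∫ u,
      (∑ k₁ : Fin r, ∑ k₂ : Fin r, b k₁ k₂ *
        ∑ j : Fin d, ψ j k₁ x * (starRingEnd ℂ) (ψ j k₂ u)) *
      (starRingEnd ℂ) (∑ k₁ : Fin r, ∑ k₂ : Fin r, b k₁ k₂ *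
        ∑ j : Fin d, ψ j k₁ y * (starRingEnd ℂ) (ψ j k₂ u)) ∂μ)
      = ∑ k₁ : Fin r, ∑ l₁ : Fin r,
          ((∑ k : Fin r, b k₁ k * (starRingEnd ℂ) (b l₁ k)) / d) *
          ∑ j : Fin d, ψ j k₁ x * (starRingEnd ℂ) (ψ j l₁ y) := by
  have h1 : ∀ u : S,
      (∑ k₁ : Fin r, ∑ k₂ : Fin r, b k₁ k₂ *
        ∑ j : Fin d, ψ j k₁ x * (starRingEnd ℂ) (ψ j k₂ u))
      = ∑ p : (Fin r × Fin r) × Fin d,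
          (b p.1.1 p.1.2 * ψ p.2 p.1.1 x) * (starRingEnd ℂ) (ψ p.2 p.1.2 u) := by
    intro u
    simp only [Fintype.sum_prod_type]
    refine Finset.sum_congr rfl fun k₁ _ => Finset.sum_congr rfl fun k₂ _ => ?_
    rw [Finset.mul_sum]
    exact Finset.sum_congr rfl fun j _ => by ring
  have h2 : ∀ u : S,
      (starRingEnd ℂ) (∑ k₁ : Fin r, ∑ k₂ : Fin r, b k₁ k₂ *
        ∑ j : Fin d, ψ j k₁ y * (starRingEnd ℂ) (ψ j k₂ u))
      = ∑ q : (Fin r × Fin r) × Fin d,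
          ((starRingEnd ℂ) (b q.1.1 q.1.2) * (starRingEnd ℂ) (ψ q.2 q.1.1 y)) * ψ q.2 q.1.2 u := by
    intro u
    simp only [map_sum, map_mul, Complex.conj_conj, Fintype.sum_prod_type]
    refine Finset.sum_congr rfl fun k₁ _ => Finset.sum_congr rfl fun k₂ _ => ?_
    rw [Finset.mul_sum]
    exact Finset.sum_congr rfl fun j _ => by ring
  simp_rw [h1, h2]
  rw [integral_csum_mul_csum _ _ _ _ (fun p => memLp_conj' (hL2 _ _)) (fun q => hL2 _ _)]
  have hI : ∀ (p q : (Fin r × Fin r) × Fin d),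
      (∫ u, (starRingEnd ℂ) (ψ p.2 p.1.2 u) * ψ q.2 q.1.2 u ∂μ)
        = if q.2 = p.2 ∧ q.1.2 = p.1.2 then (1:ℂ)/d else 0 := by
    intro p q
    rw [← horth q.2 p.2 q.1.2 p.1.2]
    congr 1; funext u; ring
  simp_rw [hI]
  simp only [Fintype.sum_prod_type, mul_ite, mul_zero, ite_and, Finset.sum_ite_eq',
    Finset.mem_univ, if_true]
  refine Finset.sum_congr rfl fun k₁ _ => ?_
  rw [sum3_comm]
  refine Finset.sum_congr rfl fun l₁ _ => ?_
  rw [Finset.sum_div, Finset.sum_mul]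
  refine Finset.sum_congr rfl fun k₂ _ => ?_
  rw [Finset.mul_sum]
  exact Finset.sum_congr rfl fun j _ => by ring

private lemma extract_zero {d r : ℕ} (hd : 0 < d)
    (ψ : Fin d → Fin r → S → ℂ)
    (hL2 : ∀ j k, MemLp (ψ j k) 2 μ)
    (horth : ∀ (j₁ j₂ : Fin d) (k₁ k₂ : Fin r),
      ∫ u, ψ j₁ k₁ u * (starRingEnd ℂ) (ψ j₂ k₂ u) ∂μ =
        if j₁ = j₂ ∧ k₁ = k₂ then (1 : ℂ) / d else 0)
    (bb : Fin r → Fin r → ℂ)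
    (h : ∀ x y : S, ∑ k₁ : Fin r, ∑ k₂ : Fin r, bb k₁ k₂ *
        ∑ j : Fin d, ψ j k₁ x * (starRingEnd ℂ) (ψ j k₂ y) = 0)
    (k' k'' : Fin r) : bb k' k'' = 0 := by
  have hdC : (d:ℂ) ≠ 0 := Nat.cast_ne_zero.mpr hd.ne'
  set j0 : Fin d := ⟨0, hd⟩ with hj0
  have hA : ∀ y : S,
      ∑ k₂ : Fin r, (bb k' k₂ * ((1:ℂ)/d)) * (starRingEnd ℂ) (ψ j0 k₂ y) = 0 := by
    intro y
    have h0 : (∫ x, (∑ k₁ : Fin r, ∑ k₂ : Fin r, bb k₁ k₂ *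
        ∑ j : Fin d, ψ j k₁ x * (starRingEnd ℂ) (ψ j k₂ y)) *
        (starRingEnd ℂ) (ψ j0 k' x) ∂μ) = 0 := by
      simp_rw [h]
      simp
    have hpt : ∀ x : S,
        (∑ k₁ : Fin r, ∑ k₂ : Fin r, bb k₁ k₂ *
          ∑ j : Fin d, ψ j k₁ x * (starRingEnd ℂ) (ψ j k₂ y))
        = ∑ p : Fin r × Fin r × Fin d,
            (bb p.2.1 p.1 * (starRingEnd ℂ) (ψ p.2.2 p.1 y)) * ψ p.2.2 p.2.1 x := by
      intro x
      rw [Finset.sum_comm]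
      simp only [Fintype.sum_prod_type]
      refine Finset.sum_congr rfl fun k₂ _ => Finset.sum_congr rfl fun k₁ _ => ?_
      rw [Finset.mul_sum]
      exact Finset.sum_congr rfl fun j _ => by ring
    simp_rw [hpt] at h0
    rw [integral_csum_mul _ _ _ (fun p => hL2 _ _) (memLp_conj' (hL2 _ _))] at h0
    have hI : ∀ p : Fin r × Fin r × Fin d,
        (∫ x, ψ p.2.2 p.2.1 x * (starRingEnd ℂ) (ψ j0 k' x) ∂μ)
          = if p.2.2 = j0 ∧ p.2.1 = k' then (1:ℂ)/d else 0 := fun p => horth _ _ _ _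
    simp_rw [hI] at h0
    simp only [Fintype.sum_prod_type, mul_ite, mul_zero, ite_and, Finset.sum_ite_eq',
      Finset.mem_univ, if_true] at h0
    refine Eq.trans ?_ h0
    exact Finset.sum_congr rfl fun k₂ _ => by ring
  have h0' : (∫ y, (∑ k₂ : Fin r, (bb k' k₂ * ((1:ℂ)/d)) *
      (starRingEnd ℂ) (ψ j0 k₂ y)) * ψ j0 k'' y ∂μ) = 0 := by
    simp_rw [hA]
    simp
  rw [integral_csum_mul _ _ _ (fun k₂ => memLp_conj' (hL2 _ _)) (hL2 _ _)] at h0'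
  have hI2 : ∀ k₂ : Fin r,
      (∫ y, (starRingEnd ℂ) (ψ j0 k₂ y) * ψ j0 k'' y ∂μ)
        = if j0 = j0 ∧ k'' = k₂ then (1:ℂ)/d else 0 := by
    intro k₂
    rw [← horth j0 j0 k'' k₂]
    congr 1; funext u; ring
  simp_rw [hI2] at h0'
  simp only [eq_self_iff_true, true_and, mul_ite, mul_zero, Finset.sum_ite_eq,
    Finset.mem_univ, if_true] at h0'
  have : bb k' k'' * ((1:ℂ)/d) * ((1:ℂ)/d) = 0 := h0'
  field_simp at this
  simpa using this

end Aux

/-- Proposition 5 of the paper: with functions `ψ_{jk}` satisfying the orthogonality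
relations `∫ ψ_{j₁k₁} conj(ψ_{j₂k₂}) dμ = δ · (1/d)` of matrix coefficients, and a real
symmetric `r × r` matrix `a`, the kernel
`K(x,y) = ∑_{k₁,k₂} a_{k₁k₂} ∑_j ψ_{jk₁}(x) conj(ψ_{jk₂}(y))` satisfies
`K(x, y) = ∫ K(x, u) conj(K(y, u)) dμ(u)` for all `x, y` if and only if the matrix
`A = (1/d) a` is idempotent. -/
theorem phase_function_iff_idempotent {S : Type*} [MeasurableSpace S]
    (μ : Measure S) [IsProbabilityMeasure μ] {d r : ℕ} (hd : 0 < d) (hr : 0 < r)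
    (ψ : Fin d → Fin r → S → ℂ)
    (hmeas : ∀ j k, Measurable (ψ j k))
    (hL2 : ∀ j k, MemLp (ψ j k) 2 μ)
    (horth : ∀ (j₁ j₂ : Fin d) (k₁ k₂ : Fin r),
      ∫ u, ψ j₁ k₁ u * (starRingEnd ℂ) (ψ j₂ k₂ u) ∂μ =
        if j₁ = j₂ ∧ k₁ = k₂ then (1 : ℂ) / d else 0)
    (a : Matrix (Fin r) (Fin r) ℝ) (ha : a.IsSymm) :
    (∀ x y : S,
      (∑ k₁ : Fin r, ∑ k₂ : Fin r, (a k₁ k₂ : ℂ) *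
          ∑ j : Fin d, ψ j k₁ x * (starRingEnd ℂ) (ψ j k₂ y)) =
        ∫ u,
          (∑ k₁ : Fin r, ∑ k₂ : Fin r, (a k₁ k₂ : ℂ) *
            ∑ j : Fin d, ψ j k₁ x * (starRingEnd ℂ) (ψ j k₂ u)) *
          (starRingEnd ℂ) (∑ k₁ : Fin r, ∑ k₂ : Fin r, (a k₁ k₂ : ℂ) *
            ∑ j : Fin d, ψ j k₁ y * (starRingEnd ℂ) (ψ j k₂ u)) ∂μ) ↔
      ((d : ℝ)⁻¹ • a) * ((d : ℝ)⁻¹ • a) = (d : ℝ)⁻¹ • a := by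
  have hdR : (d:ℝ) ≠ 0 := Nat.cast_ne_zero.mpr hd.ne'
  have hsymm : ∀ p q : Fin r, a p q = a q p := fun p q => ha.apply q p
  have h3 : ∀ i j : Fin r,
      ∑ k : Fin r, (d:ℝ)⁻¹ * a i k * ((d:ℝ)⁻¹ * a k j)
        = (d:ℝ)⁻¹ * ((d:ℝ)⁻¹ * ∑ k : Fin r, a i k * a j k) := by
    intro i j
    rw [Finset.mul_sum, Finset.mul_sum]
    refine Finset.sum_congr rfl fun k _ => ?_
    rw [hsymm k j]
    ring
  have hmat : (((d : ℝ)⁻¹ • a) * ((d : ℝ)⁻¹ • a) = (d : ℝ)⁻¹ • a) ↔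
      (∀ i j : Fin r, (a i j : ℂ) = (∑ k : Fin r, (a i k : ℂ) * (a j k : ℂ)) / (d : ℂ)) := by
    rw [← Matrix.ext_iff]
    constructor
    · intro h i j
      have h1 := h i j
      simp only [Matrix.mul_apply, Matrix.smul_apply, smul_eq_mul] at h1
      rw [h3 i j] at h1
      have h2 : (d:ℝ)⁻¹ * (∑ k : Fin r, a i k * a j k) = a i j :=
        mul_left_cancel₀ (inv_ne_zero hdR) h1
      rw [← h2]
      push_cast
      ring
    · intro h i j
      simp only [Matrix.mul_apply, Matrix.smul_apply, smul_eq_mul]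
      have hre : a i j = (∑ k : Fin r, a i k * a j k) / d := by exact_mod_cast h i j
      rw [h3 i j, hre]
      ring
  constructor
  · intro hK
    have hzero : ∀ x y : S,
        ∑ k₁ : Fin r, ∑ k₂ : Fin r,
          ((a k₁ k₂ : ℂ) - (∑ k : Fin r, (a k₁ k : ℂ) * (a k₂ k : ℂ)) / (d : ℂ)) *
          ∑ j : Fin d, ψ j k₁ x * (starRingEnd ℂ) (ψ j k₂ y) = 0 := by
      intro x y
      have h1 := hK x y
      have hkey := key_integral ψ hL2 horth (fun k₁ k₂ => ((a k₁ k₂ : ℝ) : ℂ)) x y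
      simp only [Complex.conj_ofReal] at hkey
      rw [hkey] at h1
      have hsplit : ∑ k₁ : Fin r, ∑ k₂ : Fin r,
          ((a k₁ k₂ : ℂ) - (∑ k : Fin r, (a k₁ k : ℂ) * (a k₂ k : ℂ)) / (d : ℂ)) *
          ∑ j : Fin d, ψ j k₁ x * (starRingEnd ℂ) (ψ j k₂ y)
        = (∑ k₁ : Fin r, ∑ k₂ : Fin r, (a k₁ k₂ : ℂ) *
            ∑ j : Fin d, ψ j k₁ x * (starRingEnd ℂ) (ψ j k₂ y))
          - ∑ k₁ : Fin r, ∑ k₂ : Fin r,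
              ((∑ k : Fin r, (a k₁ k : ℂ) * (a k₂ k : ℂ)) / (d : ℂ)) *
              ∑ j : Fin d, ψ j k₁ x * (starRingEnd ℂ) (ψ j k₂ y) := by
        simp [sub_mul, Finset.sum_sub_distrib]
      rw [hsplit, h1, sub_self]
    have hz := extract_zero hd ψ hL2 horth _ hzero
    refine hmat.mpr fun i j => ?_
    exact sub_eq_zero.mp (hz i j)
  · intro hM x y
    have hkey := key_integral ψ hL2 horth (fun k₁ k₂ => ((a k₁ k₂ : ℝ) : ℂ)) x y
    simp only [Complex.conj_ofReal] at hkey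
    rw [hkey]
    refine Finset.sum_congr rfl fun k₁ _ => Finset.sum_congr rfl fun l₁ _ => ?_
    rw [← hmat.mp hM k₁ l₁]
end

section
/- Let S be a nonempty set, let N ≥ 1, and let φ₁, …, φ_N : S → ℂ be linearly independent as elements of the complex vector space of all functions S → ℂ. Then there exist points x₁, …, x_N ∈ S such that for every 1 ≤ k ≤ N the k × k matrix M_k with entries (M_k)_{ij} = φᵢ(xⱼ) (1 ≤ i, j ≤ k) has nonzero determinant. (This is the paper's Lemma on the existence of fundamental sets.) -/
open Matrix Finset

lemma key_step {S : Type*} {N : ℕ} (φ : Fin N → S → ℂ) (hφ : LinearIndependent ℂ φ)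
    {k : ℕ} (h : k + 1 ≤ N) (x : Fin k → S)
    (hx : (Matrix.of fun i j : Fin k =>
      φ (Fin.castLE (Nat.le_of_succ_le h) i) (x j)).det ≠ 0) :
    ∃ y : S, (Matrix.of fun i j : Fin (k+1) =>
      φ (Fin.castLE h i) ((Fin.snoc x y : Fin (k+1) → S) j)).det ≠ 0 := by
  by_contra hc
  push_neg at hc
  set c : Fin (k+1) → ℂ := fun i => (-1 : ℂ)^((i : ℕ) + k) *
    (Matrix.of fun i' j' : Fin k => φ (Fin.castLE h (i.succAbove i')) (x j')).det with hcdef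
  have hsum : ∀ y : S, ∑ i, c i • φ (Fin.castLE h i) y = 0 := by
    intro y
    have h0 := hc y
    rw [Matrix.det_succ_column _ (Fin.last k)] at h0
    rw [← h0]
    refine Finset.sum_congr rfl fun i _ => ?_
    have hsub : (fun i' j' : Fin k => φ (Fin.castLE h (i.succAbove i')) (x j')) =
        fun i' j' : Fin k =>
          (Matrix.of fun i j : Fin (k+1) => φ (Fin.castLE h i) ((Fin.snoc x y : Fin (k+1) → S) j))
            (i.succAbove i') ((Fin.last k).succAbove j') := by
      funext i' j'
      simp [Fin.succAbove_last, Fin.snoc_castSucc]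
    simp only [hcdef, Matrix.submatrix, Matrix.of_apply, hsub, Fin.val_last,
      Fin.snoc_last, smul_eq_mul]
    ring
  have hli : LinearIndependent ℂ (fun i : Fin (k+1) => φ (Fin.castLE h i)) :=
    hφ.comp _ (Fin.castLE_injective h)
  have hc0 : ∀ i, c i = 0 := by
    refine Fintype.linearIndependent_iff.mp hli c ?_
    funext y
    simpa using hsum y
  have hlast := hc0 (Fin.last k)
  have heq : (Matrix.of fun i' j' : Fin k =>
      φ (Fin.castLE h ((Fin.last k).succAbove i')) (x j')) =
      (Matrix.of fun i j : Fin k => φ (Fin.castLE (Nat.le_of_succ_le h) i) (x j)) := by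
    funext i' j'
    simp [Fin.succAbove_last]
  rw [hcdef] at hlast
  simp only [Fin.val_last, heq] at hlast
  rw [mul_eq_zero] at hlast
  rcases hlast with h1 | h2
  · exact (pow_ne_zero _ (by norm_num) h1)
  · exact hx h2

/-- Existence of fundamental sets: if `φ₁, …, φ_N : S → ℂ` are linearly independent
functions on a nonempty set `S`, then there exist points `x₁, …, x_N ∈ S` such that for
every `1 ≤ k ≤ N` the `k × k` matrix `(φᵢ(xⱼ))_{1 ≤ i,j ≤ k}` has nonzero determinant. -/
theorem exists_fundamental_set {S : Type*} [Nonempty S] {N : ℕ} (hN : 1 ≤ N)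
    (φ : Fin N → S → ℂ) (hφ : LinearIndependent ℂ φ) :
    ∃ x : Fin N → S, ∀ (k : ℕ) (hk1 : 1 ≤ k) (hkN : k ≤ N),
      (Matrix.of fun i j : Fin k =>
        φ (Fin.castLE hkN i) (x (Fin.castLE hkN j))).det ≠ 0 := by
  suffices H : ∀ k : ℕ, 1 ≤ k → ∀ hkN : k ≤ N, ∃ x : Fin k → S,
      ∀ (m : ℕ) (hm1 : 1 ≤ m) (hm : m ≤ k),
        (Matrix.of fun i j : Fin m =>
          φ (Fin.castLE (hm.trans hkN) i) (x (Fin.castLE hm j))).det ≠ 0 by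
    obtain ⟨x, hx⟩ := H N hN le_rfl
    refine ⟨x, fun k hk1 hkN => ?_⟩
    exact hx k hk1 hkN
  intro k
  induction k with
  | zero => omega
  | succ n ih =>
    intro _ hkN
    rcases Nat.eq_zero_or_pos n with h0 | hn
    · subst h0
      -- base case k = 1 : need y with φ 0 y ≠ 0
      have hne : φ (Fin.castLE hkN 0) ≠ 0 := hφ.ne_zero _
      obtain ⟨y, hy⟩ : ∃ y, φ (Fin.castLE hkN 0) y ≠ 0 := by
        by_contra hcon
        push_neg at hcon
        exact hne (funext hcon)
      refine ⟨fun _ => y, fun m hm1 hm => ?_⟩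
      interval_cases m
      rw [show (Matrix.of fun i j : Fin 1 =>
          φ (Fin.castLE (hm.trans hkN) i) ((fun _ => y) (Fin.castLE hm j))) =
          Matrix.of fun _ _ : Fin 1 => φ (Fin.castLE hkN 0) y from by
        funext i j; simp [Subsingleton.elim i 0]]
      simp [Matrix.det_fin_one, hy]
    · obtain ⟨x, hx⟩ := ih hn (Nat.le_of_succ_le hkN)
      have hdet := hx n hn le_rfl
      have hdet' : (Matrix.of fun i j : Fin n =>
          φ (Fin.castLE (Nat.le_of_succ_le hkN) i) (x j)).det ≠ 0 := by
        convert hdet using 2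
        rfl
      obtain ⟨y, hy⟩ := key_step φ hφ hkN x hdet'
      refine ⟨Fin.snoc x y, fun m hm1 hm => ?_⟩
      rcases Nat.lt_or_ge m (n+1) with hlt | hge
      · have hmn : m ≤ n := Nat.lt_succ_iff.mp hlt
        have := hx m hm1 hmn
        convert this using 2
        funext i j
        have hj : Fin.castLE hm j = Fin.castSucc (Fin.castLE hmn j) := by ext; simp
        simp only [Matrix.of_apply, hj, Fin.snoc_castSucc]
      · have hm' : m = n + 1 := le_antisymm hm hge
        subst hm'
        convert hy using 2
        rfl
end

section
/- Let n ≥ 1, let a > 0 and ν > 0 be real numbers, and let z ∈ ℝⁿ. Then ∫_{ℝⁿ} (a + 4π²‖ξ‖²)^{-(ν + n/2)} · e^{2πi⟨z, ξ⟩} dξ = (4π)^{-n/2} · Γ(ν + n/2)⁻¹ · ∫₀^∞ u^{ν−1} · e^{−a·u} · e^{−‖z‖²/(4u)} du, where both integrals converge absolutely and the left-hand side (a priori complex) equals the real right-hand side. (This identity is the content of the paper's proof that the Euclidean Matérn kernel is a Gamma mixture of squared exponential (heat) kernels.) -/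
open MeasureTheory Real Set

set_option maxHeartbeats 1000000 in
/-- The Euclidean Matérn kernel is a Gamma mixture of heat kernels: for `a, ν > 0` and
`z ∈ ℝⁿ`, the inverse Fourier transform of `(a + 4π²‖ξ‖²)^{-(ν+n/2)}` equals
`(4π)^{-n/2} Γ(ν+n/2)⁻¹ ∫₀^∞ u^{ν-1} e^{-au} e^{-‖z‖²/(4u)} du`; both integrals converge
absolutely. -/
theorem matern_is_gamma_mixture_of_heat (n : ℕ) (hn : 1 ≤ n) (a ν : ℝ)
    (ha : 0 < a) (hν : 0 < ν) (z : EuclideanSpace ℝ (Fin n)) :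
    Integrable (fun ξ : EuclideanSpace ℝ (Fin n) =>
      (((a + 4 * π ^ 2 * ‖ξ‖ ^ 2) ^ (-(ν + n / 2)) : ℝ) : ℂ) *
        Complex.exp (2 * π * Complex.I *
          ((@inner ℝ (EuclideanSpace ℝ (Fin n)) _ z ξ : ℝ) : ℂ))) ∧
    IntegrableOn (fun u : ℝ =>
      u ^ (ν - 1) * Real.exp (-a * u) * Real.exp (-‖z‖ ^ 2 / (4 * u))) (Set.Ioi 0) ∧
    (∫ ξ : EuclideanSpace ℝ (Fin n),
        (((a + 4 * π ^ 2 * ‖ξ‖ ^ 2) ^ (-(ν + n / 2)) : ℝ) : ℂ) *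
          Complex.exp (2 * π * Complex.I *
            ((@inner ℝ (EuclideanSpace ℝ (Fin n)) _ z ξ : ℝ) : ℂ))) =
      (((4 * π) ^ (-(n : ℝ) / 2) * (Real.Gamma (ν + n / 2))⁻¹ *
        ∫ u in Set.Ioi (0 : ℝ),
          u ^ (ν - 1) * Real.exp (-a * u) * Real.exp (-‖z‖ ^ 2 / (4 * u)) : ℝ) : ℂ) := by
  have hπ : (0 : ℝ) < π := Real.pi_pos
  set s : ℝ := ν + n / 2 with hs_def
  have hs : 0 < s := by positivity
  have hΓ : Real.Gamma s ≠ 0 := (Real.Gamma_pos_of_pos hs).ne'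
  have ht : ∀ ξ : EuclideanSpace ℝ (Fin n), 0 < a + 4 * π ^ 2 * ‖ξ‖ ^ 2 := fun ξ => by positivity
  -- notation
  set e : EuclideanSpace ℝ (Fin n) → ℂ := fun ξ =>
    Complex.exp (2 * π * Complex.I * ((@inner ℝ (EuclideanSpace ℝ (Fin n)) _ z ξ : ℝ) : ℂ))
    with he_def
  set g : EuclideanSpace ℝ (Fin n) → ℝ → ℝ := fun ξ u =>
    u ^ (s - 1) * Real.exp (-((a + 4 * π ^ 2 * ‖ξ‖ ^ 2) * u)) with hg_def
  have hnorm_e : ∀ ξ, ‖e ξ‖ = 1 := by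
    intro ξ
    have : (2 * π * Complex.I * ((@inner ℝ (EuclideanSpace ℝ (Fin n)) _ z ξ : ℝ) : ℂ)) =
        ((2 * π * (@inner ℝ (EuclideanSpace ℝ (Fin n)) _ z ξ : ℝ) : ℝ) : ℂ) * Complex.I := by
      push_cast; ring
    rw [he_def]; simp only []
    rw [this, Complex.norm_exp_ofReal_mul_I]
  -- integrability of the Matern spectral density
  have hA : Integrable (fun ξ : EuclideanSpace ℝ (Fin n) =>
      (a + 4 * π ^ 2 * ‖ξ‖ ^ 2) ^ (-s)) := by
    have h2s : (Module.finrank ℝ (EuclideanSpace ℝ (Fin n)) : ℝ) < 2 * s := by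
      rw [finrank_euclideanSpace_fin, hs_def]; push_cast; linarith
    have h0 := integrable_rpow_neg_one_add_norm_sq
      (E := EuclideanSpace ℝ (Fin n)) (μ := volume) h2s
    have hexp : -(2 * s) / 2 = -s := by ring
    rw [hexp] at h0
    set c : ℝ := min a (4 * π ^ 2) with hc
    have hc0 : 0 < c := lt_min ha (by positivity)
    refine (h0.const_mul (c ^ (-s))).mono' ?_ ?_
    · refine Continuous.aestronglyMeasurable ?_
      refine Continuous.rpow_const (by continuity) fun ξ => Or.inl (ht ξ).ne'
    · filter_upwards with ξ
      rw [Real.norm_eq_abs, abs_of_nonneg (Real.rpow_nonneg (ht ξ).le _)]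
      have h1 : c * (1 + ‖ξ‖ ^ 2) ≤ a + 4 * π ^ 2 * ‖ξ‖ ^ 2 := by
        have h2 : c ≤ a := min_le_left _ _
        have h3 : c ≤ 4 * π ^ 2 := min_le_right _ _
        nlinarith [sq_nonneg ‖ξ‖]
      calc (a + 4 * π ^ 2 * ‖ξ‖ ^ 2) ^ (-s)
          ≤ (c * (1 + ‖ξ‖ ^ 2)) ^ (-s) :=
            Real.rpow_le_rpow_of_nonpos (by positivity) h1 (by linarith)
        _ = c ^ (-s) * (1 + ‖ξ‖ ^ 2) ^ (-s) := Real.mul_rpow hc0.le (by positivity)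
  -- integrability of the LHS integrand
  have hLHS : Integrable (fun ξ : EuclideanSpace ℝ (Fin n) =>
      (((a + 4 * π ^ 2 * ‖ξ‖ ^ 2) ^ (-s) : ℝ) : ℂ) * e ξ) := by
    refine hA.mono' ?_ ?_
    · refine Continuous.aestronglyMeasurable ?_
      refine Continuous.mul ?_ ?_
      · exact Complex.continuous_ofReal.comp
          (Continuous.rpow_const (by continuity) fun ξ => Or.inl (ht ξ).ne')
      · exact Complex.continuous_exp.comp
          (continuous_const.mul (Complex.continuous_ofReal.comp
            (Continuous.inner continuous_const continuous_id)))
    · filter_upwards with ξ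
      rw [norm_mul, hnorm_e, mul_one, Complex.norm_real, Real.norm_eq_abs,
        abs_of_nonneg (Real.rpow_nonneg (ht ξ).le _)]
  -- integrability of the RHS integrand
  have hmeasR : Measurable (fun u : ℝ =>
      u ^ (ν - 1) * Real.exp (-a * u) * Real.exp (-‖z‖ ^ 2 / (4 * u))) := by
    fun_prop
  have hB : IntegrableOn (fun u : ℝ =>
      u ^ (ν - 1) * Real.exp (-a * u) * Real.exp (-‖z‖ ^ 2 / (4 * u))) (Set.Ioi 0) := by
    have h0 : IntegrableOn (fun u : ℝ => u ^ (ν - 1) * Real.exp (-a * u)) (Set.Ioi 0) := by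
      have := integrableOn_rpow_mul_exp_neg_mul_rpow
        (s := ν - 1) (p := 1) (b := a) (by linarith) one_pos ha
      simpa using this
    refine h0.mono' hmeasR.aestronglyMeasurable ?_
    filter_upwards [ae_restrict_mem measurableSet_Ioi] with u hu
    have hu0 : 0 < u := hu
    have hnn : 0 ≤ u ^ (ν - 1) * Real.exp (-a * u) :=
      mul_nonneg (Real.rpow_nonneg hu0.le _) (Real.exp_nonneg _)
    rw [Real.norm_eq_abs, abs_of_nonneg (mul_nonneg hnn (Real.exp_nonneg _))]
    refine mul_le_of_le_one_right hnn (Real.exp_le_one_iff.mpr ?_)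
    apply div_nonpos_of_nonpos_of_nonneg
    · simp [sq_nonneg]
    · linarith
  -- key Gamma identity
  have key : ∀ ξ : EuclideanSpace ℝ (Fin n),
      (a + 4 * π ^ 2 * ‖ξ‖ ^ 2) ^ (-s)
        = (Real.Gamma s)⁻¹ * ∫ u in Set.Ioi (0 : ℝ), g ξ u := by
    intro ξ
    rw [hg_def]
    simp only []
    rw [integral_rpow_mul_exp_neg_mul_Ioi hs (ht ξ), one_div,
      Real.inv_rpow (ht ξ).le, ← Real.rpow_neg (ht ξ).le,
      mul_comm ((a + 4 * π ^ 2 * ‖ξ‖ ^ 2) ^ (-s)) (Real.Gamma s),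
      inv_mul_cancel_left₀ hΓ]
  -- Fubini setup
  have hFmeas : AEStronglyMeasurable
      (Function.uncurry fun (ξ : EuclideanSpace ℝ (Fin n)) (u : ℝ) => ((g ξ u : ℝ) : ℂ) * e ξ)
      (volume.prod (volume.restrict (Set.Ioi 0))) := by
    apply Measurable.aestronglyMeasurable
    have m1 : Measurable fun p : EuclideanSpace ℝ (Fin n) × ℝ => g p.1 p.2 := by
      rw [hg_def]
      exact (by fun_prop : Measurable fun p : EuclideanSpace ℝ (Fin n) × ℝ =>
        p.2 ^ (s - 1)).mul (Real.measurable_exp.comp (by fun_prop))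
    refine (Complex.measurable_ofReal.comp m1).mul ?_
    rw [he_def]
    exact Complex.measurable_exp.comp (measurable_const.mul
      (Complex.measurable_ofReal.comp
        ((Continuous.inner continuous_const continuous_id).measurable.comp measurable_fst)))
  have hSlice : ∀ ξ : EuclideanSpace ℝ (Fin n),
      Integrable (fun u : ℝ => ((g ξ u : ℝ) : ℂ) * e ξ) (volume.restrict (Set.Ioi 0)) := by
    intro ξ
    have h0 : IntegrableOn (g ξ) (Set.Ioi 0) := by
      have h1 := integrableOn_rpow_mul_exp_neg_mul_rpow
        (s := s - 1) (p := 1) (b := a + 4 * π ^ 2 * ‖ξ‖ ^ 2) (by linarith) one_pos (ht ξ)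
      refine h1.congr_fun (fun u hu => ?_) measurableSet_Ioi
      rw [hg_def]
      simp only [Real.rpow_one]
      ring_nf
    exact (h0.ofReal.mul_const _)
  have hIntNorm : ∀ ξ : EuclideanSpace ℝ (Fin n),
      (∫ u in Set.Ioi (0 : ℝ), ‖((g ξ u : ℝ) : ℂ) * e ξ‖)
        = Real.Gamma s * (a + 4 * π ^ 2 * ‖ξ‖ ^ 2) ^ (-s) := by
    intro ξ
    have h1 : ∀ u ∈ Set.Ioi (0 : ℝ), ‖((g ξ u : ℝ) : ℂ) * e ξ‖ = g ξ u := by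
      intro u hu
      have hu0 : (0 : ℝ) < u := hu
      rw [norm_mul, hnorm_e, mul_one, Complex.norm_real, Real.norm_eq_abs, abs_of_nonneg]
      exact mul_nonneg (Real.rpow_nonneg hu0.le _) (Real.exp_nonneg _)
    rw [setIntegral_congr_fun measurableSet_Ioi h1, hg_def]
    simp only []
    rw [integral_rpow_mul_exp_neg_mul_Ioi hs (ht ξ), one_div,
      Real.inv_rpow (ht ξ).le, ← Real.rpow_neg (ht ξ).le, mul_comm]
  have hF : Integrable
      (Function.uncurry fun (ξ : EuclideanSpace ℝ (Fin n)) (u : ℝ) => ((g ξ u : ℝ) : ℂ) * e ξ)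
      (volume.prod (volume.restrict (Set.Ioi 0))) := by
    rw [MeasureTheory.integrable_prod_iff hFmeas]
    constructor
    · exact Filter.Eventually.of_forall hSlice
    · refine ((hA.const_mul (Real.Gamma s)).congr ?_)
      filter_upwards with ξ
      exact (hIntNorm ξ).symm
  have hswap := MeasureTheory.integral_integral_swap hF
  -- evaluate inner Gaussian integral
  have point2 : ∀ u ∈ Set.Ioi (0 : ℝ),
      (∫ ξ : EuclideanSpace ℝ (Fin n), ((g ξ u : ℝ) : ℂ) * e ξ)
        = (((4 * π) ^ (-(n : ℝ) / 2) *
            (u ^ (ν - 1) * Real.exp (-a * u) * Real.exp (-‖z‖ ^ 2 / (4 * u))) : ℝ) : ℂ) := by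
    intro u hu
    have hu0 : (0 : ℝ) < u := hu
    have hbre : 0 < ((4 * π ^ 2 * u : ℝ) : ℂ).re := by
      rw [Complex.ofReal_re]; positivity
    have step1 : (∫ ξ : EuclideanSpace ℝ (Fin n), ((g ξ u : ℝ) : ℂ) * e ξ)
        = ((u ^ (s - 1) * Real.exp (-a * u) : ℝ) : ℂ) *
            ∫ ξ : EuclideanSpace ℝ (Fin n),
              Complex.exp (-((4 * π ^ 2 * u : ℝ) : ℂ) * (‖ξ‖ : ℂ) ^ 2 +
                (2 * π * Complex.I) * ((@inner ℝ (EuclideanSpace ℝ (Fin n)) _ z ξ : ℝ) : ℂ)) := by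
      rw [← MeasureTheory.integral_const_mul]
      refine integral_congr_ae (Filter.Eventually.of_forall fun ξ => ?_)
      rw [hg_def, he_def]
      simp only []
      rw [show -((a + 4 * π ^ 2 * ‖ξ‖ ^ 2) * u) = -a * u + (-(4 * π ^ 2 * u) * ‖ξ‖ ^ 2) by ring,
        Real.exp_add]
      push_cast
      rw [Complex.exp_add]
      ring
    rw [step1, GaussianFourier.integral_cexp_neg_mul_sq_norm_add hbre (2 * π * Complex.I) z,
      finrank_euclideanSpace_fin]
    -- simplify the power and the exponential
    have hpow : ((π : ℂ) / ((4 * π ^ 2 * u : ℝ) : ℂ)) ^ ((n : ℂ) / 2)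
        = (((4 * π) ^ (-(n : ℝ) / 2) * u ^ (-(n : ℝ) / 2) : ℝ) : ℂ) := by
      have h1 : ((π : ℂ) / ((4 * π ^ 2 * u : ℝ) : ℂ)) = ((π / (4 * π ^ 2 * u) : ℝ) : ℂ) := by
        push_cast; ring
      have h2 : ((n : ℂ) / 2) = (((n : ℝ) / 2 : ℝ) : ℂ) := by push_cast; ring
      rw [h1, h2, ← Complex.ofReal_cpow (by positivity)]
      congr 1
      rw [show π / (4 * π ^ 2 * u) = (4 * π * u)⁻¹ by field_simp,
        ← Real.rpow_neg_one (4 * π * u), ← Real.rpow_mul (by positivity),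
        show (-1 : ℝ) * ((n : ℝ) / 2) = -(n : ℝ) / 2 by ring,
        show (4 : ℝ) * π * u = (4 * π) * u by ring,
        Real.mul_rpow (by positivity) hu0.le]
    have hexp2 : (2 * π * Complex.I) ^ 2 * (‖z‖ : ℂ) ^ 2 / (4 * ((4 * π ^ 2 * u : ℝ) : ℂ))
        = ((-‖z‖ ^ 2 / (4 * u) : ℝ) : ℂ) := by
      have hI : Complex.I ^ 2 = -1 := Complex.I_sq
      have hu' : ((u : ℂ)) ≠ 0 := Complex.ofReal_ne_zero.mpr hu0.ne'
      have hπ' : ((π : ℂ)) ≠ 0 := Complex.ofReal_ne_zero.mpr hπ.ne'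
      have hreal : (-‖z‖ ^ 2 / (4 * u) : ℝ)
          = (-(4 * π ^ 2) * ‖z‖ ^ 2) / (4 * (4 * π ^ 2 * u)) := by
        rw [div_eq_div_iff (by positivity : (0:ℝ) < 4 * u).ne'
          (by positivity : (0:ℝ) < 4 * (4 * π ^ 2 * u)).ne']
        ring
      rw [hreal]
      push_cast
      rw [show (2 * (π : ℂ) * Complex.I) ^ 2 = -(4 * (π : ℂ) ^ 2) from by
        rw [mul_pow, mul_pow, hI]; ring]
    rw [hpow, hexp2, ← Complex.ofReal_exp, ← Complex.ofReal_mul, ← Complex.ofReal_mul]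
    congr 1
    rw [show s - 1 = (ν - 1) + (n : ℝ) / 2 from by rw [hs_def]; ring, Real.rpow_add hu0]
    have huu : u ^ ((n : ℝ) / 2) * u ^ (-(n : ℝ) / 2) = 1 := by
      rw [← Real.rpow_add hu0, show ((n : ℝ) / 2 + -(n : ℝ) / 2 : ℝ) = 0 by ring,
        Real.rpow_zero]
    linear_combination (u ^ (ν - 1) * Real.exp (-a * u) * Real.exp (-‖z‖ ^ 2 / (4 * u)) *
      (4 * π) ^ (-(n : ℝ) / 2)) * huu
  -- main computation
  refine ⟨hLHS, hB, ?_⟩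
  have step0 : (∫ ξ : EuclideanSpace ℝ (Fin n),
      (((a + 4 * π ^ 2 * ‖ξ‖ ^ 2) ^ (-s) : ℝ) : ℂ) * e ξ)
      = (((4 * π) ^ (-(n : ℝ) / 2) * (Real.Gamma s)⁻¹ *
          ∫ u in Set.Ioi (0 : ℝ),
            u ^ (ν - 1) * Real.exp (-a * u) * Real.exp (-‖z‖ ^ 2 / (4 * u)) : ℝ) : ℂ) := by
    calc (∫ ξ : EuclideanSpace ℝ (Fin n),
        (((a + 4 * π ^ 2 * ‖ξ‖ ^ 2) ^ (-s) : ℝ) : ℂ) * e ξ)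
        = ∫ ξ : EuclideanSpace ℝ (Fin n),
            (((Real.Gamma s)⁻¹ : ℝ) : ℂ) * ∫ u in Set.Ioi (0 : ℝ), ((g ξ u : ℝ) : ℂ) * e ξ := by
          refine integral_congr_ae (Filter.Eventually.of_forall fun ξ => ?_)
          show (((a + 4 * π ^ 2 * ‖ξ‖ ^ 2) ^ (-s) : ℝ) : ℂ) * e ξ
              = (((Real.Gamma s)⁻¹ : ℝ) : ℂ) * ∫ u in Set.Ioi (0 : ℝ), ((g ξ u : ℝ) : ℂ) * e ξ
          rw [key ξ, Complex.ofReal_mul, mul_assoc]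
          congr 1
          rw [MeasureTheory.integral_mul_const]
          congr 1
          exact (integral_ofReal (f := g ξ) (𝕜 := ℂ)).symm
      _ = (((Real.Gamma s)⁻¹ : ℝ) : ℂ) * ∫ ξ : EuclideanSpace ℝ (Fin n),
            ∫ u in Set.Ioi (0 : ℝ), ((g ξ u : ℝ) : ℂ) * e ξ :=
          MeasureTheory.integral_const_mul _ _
      _ = (((Real.Gamma s)⁻¹ : ℝ) : ℂ) * ∫ u in Set.Ioi (0 : ℝ),
            ∫ ξ : EuclideanSpace ℝ (Fin n), ((g ξ u : ℝ) : ℂ) * e ξ := by rw [hswap]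
      _ = (((Real.Gamma s)⁻¹ : ℝ) : ℂ) * ∫ u in Set.Ioi (0 : ℝ),
            (((4 * π) ^ (-(n : ℝ) / 2) *
              (u ^ (ν - 1) * Real.exp (-a * u) * Real.exp (-‖z‖ ^ 2 / (4 * u))) : ℝ) : ℂ) := by
          rw [setIntegral_congr_fun measurableSet_Ioi fun u hu => point2 u hu]
      _ = (((Real.Gamma s)⁻¹ : ℝ) : ℂ) *
            ((∫ u in Set.Ioi (0 : ℝ), (4 * π) ^ (-(n : ℝ) / 2) *
              (u ^ (ν - 1) * Real.exp (-a * u) * Real.exp (-‖z‖ ^ 2 / (4 * u))) : ℝ) : ℂ) := by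
          congr 1
          exact integral_ofReal (𝕜 := ℂ)
      _ = (((4 * π) ^ (-(n : ℝ) / 2) * (Real.Gamma s)⁻¹ *
            ∫ u in Set.Ioi (0 : ℝ),
              u ^ (ν - 1) * Real.exp (-a * u) * Real.exp (-‖z‖ ^ 2 / (4 * u)) : ℝ) : ℂ) := by
          rw [MeasureTheory.integral_const_mul]
          push_cast
          ring
  exact step0
end
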